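/- Let K_* be a generalized homology theory with values in Λ-modules and let T^k = (S¹)^k be the k-torus. For 1 ≤ i ≤ k let T^k_i ⊆ T^k be the subspace of points whose i-th coordinate is the basepoint, with inclusion j^k_i. Then for every n there is an isomorphism of Λ-modules coker(⊕_{i=1}^k K_n(j^k_i) : ⊕_{i=1}^k K_n(T^k_i) → K_n(T^k)) ≅ K_{n−k}(pt). -/

import Mathlib

open CategoryTheory

/-- The `k`-torus `T^k = (S¹)^k` as a topological space. -/
noncomputable def Torus (k : ℕ) : TopCat.{0} := TopCat.of (Fin k → Circle)

/-- The subspace `T^k_i ⊆ T^k` of points whose `i`-th coordinate is the basepoint `1 ∈ S¹`. -/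
noncomputable def TorusSub (k : ℕ) (i : Fin k) : TopCat.{0} :=
  TopCat.of {x : Fin k → Circle // x i = 1}

/-- The inclusion `j^k_i : T^k_i → T^k`. -/
noncomputable def torusIncl (k : ℕ) (i : Fin k) : TorusSub k i ⟶ Torus k :=
  TopCat.ofHom (ContinuousMap.mk (fun x : {x : Fin k → Circle // x i = 1} => x.1) continuous_subtype_val)

/-- For `X` a space, the projection `X × S¹ → X`. -/
noncomputable def prFst (X : TopCat.{0}) : TopCat.of (X × Circle) ⟶ X :=
  TopCat.ofHom (ContinuousMap.fst : C(X × Circle, X))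

/-- For `f : X → Y`, the map `f × id : X × S¹ → Y × S¹`. -/
noncomputable def prodS1Map {X Y : TopCat.{0}} (f : X ⟶ Y) :
    TopCat.of (X × Circle) ⟶ TopCat.of (Y × Circle) :=
  TopCat.ofHom (ContinuousMap.prodMap f.hom (ContinuousMap.id Circle))

lemma continuous_finSnoc (k : ℕ) :
    Continuous (fun p : (Fin k → Circle) × Circle => (Fin.snoc p.1 p.2 : Fin (k+1) → Circle)) := by
  refine continuous_pi fun i => ?_
  refine Fin.lastCases (motive := fun i => Continuous fun p : (Fin k → Circle) × Circle =>
    (Fin.snoc p.1 p.2 : Fin (k+1) → Circle) i) ?_ (fun j => ?_) i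
  · simp only [Fin.snoc_last]; exact continuous_snd
  · simp only [Fin.snoc_castSucc]; exact (continuous_apply j).comp continuous_fst

def torusSubHomeo (k : ℕ) (i : Fin k) :
    {x : Fin (k+1) → Circle // x i.castSucc = 1} ≃ₜ {x : Fin k → Circle // x i = 1} × Circle where
  toFun x := (⟨fun j => x.1 j.castSucc, x.2⟩, x.1 (Fin.last k))
  invFun p := ⟨Fin.snoc p.1.1 p.2, by rw [Fin.snoc_castSucc]; exact p.1.2⟩
  left_inv x := by
    apply Subtype.ext
    funext j
    refine Fin.lastCases ?_ (fun j' => ?_) j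
    · simp
    · simp
  right_inv p := by
    refine Prod.ext (Subtype.ext ?_) ?_
    · funext j; simp
    · simp
  continuous_toFun := by
    show Continuous fun x : {x : Fin (k+1) → Circle // x i.castSucc = 1} =>
      ((⟨fun j => x.1 j.castSucc, x.2⟩ : {x : Fin k → Circle // x i = 1}), x.1 (Fin.last k))
    exact Continuous.prodMk
      (Continuous.subtype_mk (continuous_pi fun j =>
        (continuous_apply (j.castSucc)).comp continuous_subtype_val) (fun x => x.2))
      ((continuous_apply _).comp continuous_subtype_val)
  continuous_invFun := Continuous.subtype_mk
    ((continuous_finSnoc k).comp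
      (Continuous.prodMk (continuous_subtype_val.comp continuous_fst) continuous_snd))
    (fun p => by show (Fin.snoc p.1.1 p.2 : Fin (k+1) → Circle) i.castSucc = 1; rw [Fin.snoc_castSucc]; exact p.1.2)


def torusSuccHomeo (k : ℕ) : (Fin (k+1) → Circle) ≃ₜ (Fin k → Circle) × Circle where
  toFun x := (fun i => x i.castSucc, x (Fin.last k))
  invFun p := Fin.snoc p.1 p.2
  left_inv x := by
    funext i
    refine Fin.lastCases ?_ (fun j => ?_) i <;> simp
  right_inv p := by simp
  continuous_toFun := Continuous.prodMk
    (continuous_pi fun i => continuous_apply _) (continuous_apply _)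
  continuous_invFun := continuous_finSnoc k

noncomputable def torusSuccIso (k : ℕ) : Torus (k+1) ≅ TopCat.of ((Torus k) × Circle) :=
  TopCat.isoOfHomeo (torusSuccHomeo k)

noncomputable def torusSubIso (k : ℕ) (i : Fin k) :
    TorusSub (k+1) i.castSucc ≅ TopCat.of ((TorusSub k i) × Circle) :=
  TopCat.isoOfHomeo (torusSubHomeo k i)

noncomputable def torusSubLastHomeo (k : ℕ) :
    {x : Fin (k+1) → Circle // x (Fin.last k) = 1} ≃ₜ (Fin k → Circle) where
  toFun x := fun j => x.1 j.castSucc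
  invFun y := ⟨Fin.snoc y 1, Fin.snoc_last _ _⟩
  left_inv x := by
    apply Subtype.ext
    funext j
    refine Fin.lastCases ?_ (fun j' => ?_) j
    · simp [x.2]
    · simp
  right_inv y := by funext j; simp
  continuous_toFun := by
    show Continuous fun (x : {x : Fin (k+1) → Circle // x (Fin.last k) = 1}) (j : Fin k) => x.1 j.castSucc
    exact continuous_pi fun j => (continuous_apply (j.castSucc)).comp continuous_subtype_val
  continuous_invFun := Continuous.subtype_mk
    ((continuous_finSnoc k).comp (Continuous.prodMk continuous_id continuous_const))
    (fun y => by show (Fin.snoc y 1 : Fin (k+1) → Circle) (Fin.last k) = 1; exact Fin.snoc_last _ _)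

noncomputable def torusSubLastIso (k : ℕ) : TorusSub (k+1) (Fin.last k) ≅ Torus k :=
  TopCat.isoOfHomeo (torusSubLastHomeo k)

noncomputable def inclOne (X : TopCat.{0}) : X ⟶ TopCat.of (X × Circle) :=
  TopCat.ofHom (ContinuousMap.mk (fun x : X => (x, (1 : Circle))) (Continuous.prodMk continuous_id continuous_const))

lemma square1 (k : ℕ) (i : Fin k) :
    torusIncl (k+1) i.castSucc ≫ (torusSuccIso k).hom
      = (torusSubIso k i).hom ≫ prodS1Map (torusIncl k i) := by
  ext1 x
  rfl

lemma square2 (k : ℕ) :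
    torusIncl (k+1) (Fin.last k) ≫ (torusSuccIso k).hom
      = (torusSubLastIso k).hom ≫ inclOne (Torus k) := by
  ext1 x
  exact Prod.ext rfl x.2

lemma square3 (k : ℕ) (i : Fin k) :
    torusIncl k i ≫ inclOne (Torus k)
      = inclOne (TorusSub k i) ≫ prodS1Map (torusIncl k i) := by
  ext1 x
  rfl

lemma square4 (X : TopCat.{0}) : inclOne X ≫ prFst X = 𝟙 X := rfl

def torusZeroHomeo : (Fin 0 → Circle) ≃ₜ PUnit.{1} where
  toFun _ := PUnit.unit
  invFun _ := Fin.elim0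
  left_inv x := funext fun i => i.elim0
  right_inv _ := rfl
  continuous_toFun := continuous_const
  continuous_invFun := continuous_pi fun i => i.elim0

noncomputable def torusZeroIso : Torus 0 ≅ TopCat.of PUnit := TopCat.isoOfHomeo torusZeroHomeo


/-- Let `K_*` be a generalized homology theory with values in `Λ`-modules, encoded by its
underlying functors `Kb n : TopCat → Λ-Mod` (`n ∈ ℤ`) together with the natural splittings
`B n X : K_n(X × S¹) ≅ K_n(X) ⊕ K_{n−1}(X)` provided by the suspension isomorphism, the
first component of `B` being induced by the projection `X × S¹ → X`.  Then for every `n`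
there is an isomorphism of `Λ`-modules
`coker(⊕_{i=1}^k K_n(j^k_i) : ⊕_i K_n(T^k_i) → K_n(T^k)) ≅ K_{n−k}(pt)`. -/
theorem stmt17 {Λ : Type} [CommRing Λ]
    (Kb : ℤ → TopCat.{0} → Type)
    [∀ n X, AddCommGroup (Kb n X)] [∀ n X, Module Λ (Kb n X)]
    (Kmap : ∀ (n : ℤ) ⦃X Y : TopCat.{0}⦄, (X ⟶ Y) → (Kb n X →ₗ[Λ] Kb n Y))
    (hKid : ∀ (n : ℤ) (X : TopCat.{0}), Kmap n (𝟙 X) = LinearMap.id)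
    (hKcomp : ∀ (n : ℤ) ⦃X Y Z : TopCat.{0}⦄ (f : X ⟶ Y) (g : Y ⟶ Z),
      Kmap n (f ≫ g) = (Kmap n g).comp (Kmap n f))
    (B : ∀ (n : ℤ) (X : TopCat.{0}),
      Kb n (TopCat.of (X × Circle)) ≃ₗ[Λ] Kb n X × Kb (n - 1) X)
    (hBnat : ∀ (n : ℤ) ⦃X Y : TopCat.{0}⦄ (f : X ⟶ Y)
      (x : Kb n (TopCat.of (X × Circle))),
      B n Y (Kmap n (prodS1Map f) x)
        = (Kmap n f (B n X x).1, Kmap (n - 1) f (B n X x).2))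
    (hBfst : ∀ (n : ℤ) (X : TopCat.{0}) (x : Kb n (TopCat.of (X × Circle))),
      (B n X x).1 = Kmap n (prFst X) x)
    (n : ℤ) (k : ℕ) :
    Nonempty
      ((Kb n (Torus k) ⧸
          ⨆ i : Fin k, LinearMap.range (Kmap n (torusIncl k i)))
        ≃ₗ[Λ] Kb (n - k) (TopCat.of PUnit)) := by
  have kc : ∀ (m : ℤ) {X Y Z : TopCat.{0}} (f : X ⟶ Y) (g : Y ⟶ Z) (x : Kb m X),
      Kmap m g (Kmap m f x) = Kmap m (f ≫ g) x := by
    intro m X Y Z f g x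
    rw [hKcomp]; rfl
  have kid : ∀ (m : ℤ) (X : TopCat.{0}) (x : Kb m X), Kmap m (𝟙 X) x = x := by
    intro m X x; rw [hKid]; rfl
  have kinv : ∀ (m : ℤ) {X Y : TopCat.{0}} (e : X ≅ Y) (x : Kb m X),
      Kmap m e.inv (Kmap m e.hom x) = x := by
    intro m X Y e x
    rw [kc, Iso.hom_inv_id, kid]
  have kinv' : ∀ (m : ℤ) {X Y : TopCat.{0}} (e : X ≅ Y) (x : Kb m Y),
      Kmap m e.hom (Kmap m e.inv x) = x := by
    intro m X Y e x
    rw [kc, Iso.inv_hom_id, kid]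
  have F1 : ∀ (m : ℤ) (X : TopCat.{0}) (a : Kb m X),
      B m X (Kmap m (inclOne X) a)
        = (a, (B m X (Kmap m (inclOne X) a)).2) := by
    intro m X a
    refine Prod.ext ?_ rfl
    rw [hBfst, kc, square4, kid]
  have ecast : ∀ {m m' : ℤ}, m = m' →
      (Kb m (TopCat.of PUnit) ≃ₗ[Λ] Kb m' (TopCat.of PUnit)) := by
    intro m m' h
    subst h
    exact LinearEquiv.refl _ _
  induction k generalizing n with
  | zero =>
    have hbot : (⨆ i : Fin 0, LinearMap.range (Kmap n (torusIncl 0 i))) = ⊥ :=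
      iSup_of_empty _
    have e2 : Kb n (Torus 0) ≃ₗ[Λ] Kb n (TopCat.of PUnit) :=
      LinearEquiv.ofLinear (Kmap n torusZeroIso.hom) (Kmap n torusZeroIso.inv)
        (by rw [← hKcomp, Iso.inv_hom_id, hKid]) (by rw [← hKcomp, Iso.hom_inv_id, hKid])
    refine ⟨((Submodule.quotEquivOfEqBot _ hbot).trans e2).trans (ecast (by simp))⟩
  | succ k ih =>
    obtain ⟨eIH⟩ := ih (n - 1)
    -- set up notation
    set S' : Submodule Λ (Kb n (Torus (k+1))) :=
      ⨆ i : Fin (k+1), LinearMap.range (Kmap n (torusIncl (k+1) i)) with hS'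
    set U' : Submodule Λ (Kb (n-1) (Torus k)) :=
      ⨆ i : Fin k, LinearMap.range (Kmap (n-1) (torusIncl k i)) with hU'
    set σ : Kb n (Torus k) →ₗ[Λ] Kb (n-1) (Torus k) :=
      (LinearMap.snd Λ (Kb n (Torus k)) (Kb (n-1) (Torus k))) ∘ₗ
        (B n (Torus k)).toLinearMap ∘ₗ Kmap n (inclOne (Torus k)) with hσ
    set ψ : Kb n (Torus (k+1)) →ₗ[Λ] (Kb (n-1) (Torus k) ⧸ U') :=
      U'.mkQ ∘ₗ
        ((LinearMap.snd Λ (Kb n (Torus k)) (Kb (n-1) (Torus k))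
          - σ ∘ₗ LinearMap.fst Λ (Kb n (Torus k)) (Kb (n-1) (Torus k))) ∘ₗ
        ((B n (Torus k)).toLinearMap ∘ₗ Kmap n (torusSuccIso k).hom)) with hψ
    have hψapp : ∀ x : Kb n (Torus (k+1)),
        ψ x = U'.mkQ ((B n (Torus k) (Kmap n (torusSuccIso k).hom x)).2
          - σ (B n (Torus k) (Kmap n (torusSuccIso k).hom x)).1) := by
      intro x; rfl
    have hF1' : ∀ a : Kb n (Torus k),
        B n (Torus k) (Kmap n (inclOne (Torus k)) a) = (a, σ a) := by
      intro a
      exact F1 n (Torus k) a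
    -- the map sending the second factor back into K_n(T^{k+1})
    set g : Kb (n-1) (Torus k) →ₗ[Λ] Kb n (Torus (k+1)) :=
      (Kmap n (torusSuccIso k).inv) ∘ₗ ((B n (Torus k)).symm.toLinearMap) ∘ₗ
        (LinearMap.inr Λ (Kb n (Torus k)) (Kb (n-1) (Torus k))) with hg
    have hgapp : ∀ c, g c = Kmap n (torusSuccIso k).inv ((B n (Torus k)).symm (0, c)) := by
      intro c; rfl
    -- rearranged squares
    have heqlast : inclOne (Torus k) ≫ (torusSuccIso k).inv
        = (torusSubLastIso k).inv ≫ torusIncl (k+1) (Fin.last k) := by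
      rw [Iso.comp_inv_eq, Category.assoc, square2 k, ← Category.assoc,
        Iso.inv_hom_id, Category.id_comp]
    have heqcast : ∀ i : Fin k, prodS1Map (torusIncl k i) ≫ (torusSuccIso k).inv
        = (torusSubIso k i).inv ≫ torusIncl (k+1) i.castSucc := by
      intro i
      rw [Iso.comp_inv_eq, Category.assoc, square1 k i, ← Category.assoc,
        Iso.inv_hom_id, Category.id_comp]
    -- membership facts
    have mem1 : ∀ a : Kb n (Torus k),
        Kmap n (torusSuccIso k).inv (Kmap n (inclOne (Torus k)) a) ∈ S' := by
      intro a
      rw [kc, heqlast, ← kc]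
      exact Submodule.mem_iSup_of_mem (Fin.last k)
        ⟨Kmap n (torusSubLastIso k).inv a, rfl⟩
    have memg : ∀ c ∈ U', g c ∈ S' := by
      have : U' ≤ S'.comap g := by
        rw [hU']
        refine iSup_le fun i => ?_
        rintro _ ⟨c₀, rfl⟩
        have hBs : (B n (Torus k)).symm (0, Kmap (n-1) (torusIncl k i) c₀)
            = Kmap n (prodS1Map (torusIncl k i))
                ((B n (TorusSub k i)).symm (0, c₀)) := by
          rw [LinearEquiv.symm_apply_eq, hBnat, LinearEquiv.apply_symm_apply]
          simp
        simp only [Submodule.mem_comap, hgapp, hBs]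
        rw [kc, heqcast i, ← kc]
        exact Submodule.mem_iSup_of_mem i.castSucc
          ⟨Kmap n (torusSubIso k i).inv ((B n (TorusSub k i)).symm (0, c₀)), rfl⟩
      exact fun c hc => this hc
    -- σ maps ranges into ranges
    have hσrange : ∀ (i : Fin k) (a₀ : Kb n (TorusSub k i)),
        σ (Kmap n (torusIncl k i) a₀) ∈ U' := by
      intro i a₀
      have h1 : Kmap n (inclOne (Torus k)) (Kmap n (torusIncl k i) a₀)
          = Kmap n (prodS1Map (torusIncl k i)) (Kmap n (inclOne (TorusSub k i)) a₀) := by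
        rw [kc, kc, square3]
      have : σ (Kmap n (torusIncl k i) a₀)
          = Kmap (n-1) (torusIncl k i)
              ((B n (TorusSub k i) (Kmap n (inclOne (TorusSub k i)) a₀)).2) := by
        show (B n (Torus k) (Kmap n (inclOne (Torus k)) (Kmap n (torusIncl k i) a₀))).2 = _
        rw [h1, hBnat]
      rw [this]
      exact Submodule.mem_iSup_of_mem i ⟨_, rfl⟩
    -- surjectivity of ψ
    have hsurj : Function.Surjective ψ := by
      intro y
      obtain ⟨y, rfl⟩ := Submodule.mkQ_surjective U' y
      refine ⟨Kmap n (torusSuccIso k).inv ((B n (Torus k)).symm (0, y)), ?_⟩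
      rw [hψapp, kinv', LinearEquiv.apply_symm_apply]
      simp
    -- kernel of ψ
    have hker : LinearMap.ker ψ = S' := by
      apply le_antisymm
      · -- ker ψ ≤ S'
        intro x hx
        rw [LinearMap.mem_ker, hψapp] at hx
        have hx' : (B n (Torus k) (Kmap n (torusSuccIso k).hom x)).2
            - σ (B n (Torus k) (Kmap n (torusSuccIso k).hom x)).1 ∈ U' := by
          rwa [Submodule.mkQ_apply, Submodule.Quotient.mk_eq_zero] at hx
        set p := B n (Torus k) (Kmap n (torusSuccIso k).hom x) with hp
        have hdecomp : Kmap n (torusSuccIso k).hom x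
            = Kmap n (inclOne (Torus k)) p.1 + (B n (Torus k)).symm (0, p.2 - σ p.1) := by
          apply (B n (Torus k)).injective
          rw [map_add, hF1', LinearEquiv.apply_symm_apply, ← hp]
          refine Prod.ext ?_ ?_
          · simp
          · simp
        have hxe : x = Kmap n (torusSuccIso k).inv (Kmap n (torusSuccIso k).hom x) :=
          (kinv n _ x).symm
        rw [hxe, hdecomp, map_add]
        refine S'.add_mem (mem1 p.1) ?_
        have := memg _ hx'
        rwa [hgapp] at this
      · rw [hS']
        refine iSup_le fun i => ?_
        induction i using Fin.lastCases with
        | last =>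
          rintro _ ⟨x₀, rfl⟩
          rw [LinearMap.mem_ker, hψapp]
          have h2 : Kmap n (torusSuccIso k).hom (Kmap n (torusIncl (k+1) (Fin.last k)) x₀)
              = Kmap n (inclOne (Torus k)) (Kmap n (torusSubLastIso k).hom x₀) := by
            rw [kc, kc, square2]
          rw [h2, hF1']
          simp
        | cast j =>
          rintro _ ⟨x₀, rfl⟩
          rw [LinearMap.mem_ker, hψapp]
          have h2 : Kmap n (torusSuccIso k).hom (Kmap n (torusIncl (k+1) j.castSucc) x₀)
              = Kmap n (prodS1Map (torusIncl k j)) (Kmap n (torusSubIso k j).hom x₀) := by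
            rw [kc, kc, square1]
          rw [h2, hBnat, Submodule.mkQ_apply, Submodule.Quotient.mk_eq_zero]
          exact U'.sub_mem
            (Submodule.mem_iSup_of_mem j ⟨_, rfl⟩)
            (hσrange j _)
    refine ⟨(((Submodule.quotEquivOfEq S' (LinearMap.ker ψ) hker.symm).trans
      (ψ.quotKerEquivOfSurjective hsurj)).trans eIH).trans
      (ecast (by push_cast; ring))⟩
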